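/- For every tuple (k1,…,kr) of positive integers, there exists an entire function Λ : ℂ → ℂ such that Λ(s) = λ(k1,…,kr; s) for all s with Re(s) > 0, and Λ(−n) = (−1)^n · ℰ_n^{(k1,…,kr)} for every integer n ≥ 0, where ℰ_n^{(k1,…,kr)} denotes the n-th derivative at 0 of the function t ↦ g_{(k1,…,kr)}(t)/cosh(t) (equivalently, the coefficients in its Taylor expansion Σ_{n≥0} ℰ_n^{(k1,…,kr)} t^n/n!, which are the multi-poly-Euler numbers). -/

import Mathlib

open Filter Finset MeasureTheory intervalIntegral
open Topology Asymptotics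

/-- Auxiliary recursion (on the *reversed* index): `gaux (k_r :: ⋯ :: k_1 :: [])` is the
function `x ↦ 𝒜(k_1,…,k_r; tanh(x/2 + πi/4))`. -/
noncomputable def gaux : List ℕ → ℝ → ℂ
  | [] => fun _ => 1
  | 0 :: ks => gaux ks
  | 1 :: ks => fun x => -Complex.I * ∫ u in (0 : ℝ)..x, gaux ks u
  | (k + 2) :: ks => fun x =>
      -Complex.I * ∫ u in (0 : ℝ)..x, gaux ((k + 1) :: ks) u / (Real.cosh u : ℂ)
termination_by ks => ks.sum + ks.length
decreasing_by
  all_goals simp [List.sum_cons]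
  omega

/-- The function `g_{(k_1,…,k_r)} : ℝ → ℂ`, i.e. `x ↦ 𝒜(k_1,…,k_r; tanh(x/2 + πi/4))`. -/
noncomputable def gfun (ks : List ℕ) : ℝ → ℂ := gaux ks.reverse

/-- The Arakawa–Kaneko type zeta function of level four:
`λ(k_1,…,k_r; s) = (1/Γ(s)) ∫₀^∞ t^{s-1} g_{(k_1,…,k_r)}(t)/cosh t dt`. -/
noncomputable def lambdaFun (ks : List ℕ) (s : ℂ) : ℂ :=
  (1 / Complex.Gamma s) *
    ∫ t in Set.Ioi (0 : ℝ), (t : ℂ) ^ (s - 1) * gfun ks t / (Real.cosh t : ℂ)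

namespace S17

inductive E : Type
  | one : E
  | smul : ℂ → E → E
  | add : E → E → E
  | sech : E → E
  | tanh : E → E
  | int : E → E

noncomputable def eval : E → ℝ → ℂ
  | .one, _ => 1
  | .smul c e, t => c * eval e t
  | .add e₁ e₂, t => eval e₁ t + eval e₂ t
  | .sech e, t => ((Real.cosh t : ℂ))⁻¹ * eval e t
  | .tanh e, t => ((Real.sinh t / Real.cosh t : ℝ) : ℂ) * eval e t
  | .int e, x => ∫ u in (0:ℝ)..x, eval e u

noncomputable def D : E → E
  | .one => .smul 0 .one
  | .smul c e => .smul c (D e)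
  | .add e₁ e₂ => .add (D e₁) (D e₂)
  | .sech e => .add (.sech (D e)) (.smul (-1) (.tanh (.sech e)))
  | .tanh e => .add (.tanh (D e)) (.sech (.sech e))
  | .int e => e

lemma coshC_ne (t : ℝ) : ((Real.cosh t : ℂ)) ≠ 0 := by
  exact_mod_cast (Real.cosh_pos t).ne'

lemma continuous_eval : ∀ e, Continuous (eval e)
  | .one => continuous_const
  | .smul c e => continuous_const.mul (continuous_eval e)
  | .add e₁ e₂ => (continuous_eval e₁).add (continuous_eval e₂)
  | .sech e => (((Complex.continuous_ofReal.comp Real.continuous_cosh).inv₀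
      (fun t => coshC_ne t)).mul (continuous_eval e))
  | .tanh e => ((Complex.continuous_ofReal.comp
      (Real.continuous_sinh.div Real.continuous_cosh fun t => (Real.cosh_pos t).ne')).mul
      (continuous_eval e))
  | .int e => intervalIntegral.continuous_primitive
      (fun a b => (continuous_eval e).intervalIntegrable a b) 0

lemma hasDerivAt_eval : ∀ (e : E) (t : ℝ), HasDerivAt (eval e) (eval (D e) t) t := by
  intro e
  induction e with
  | one =>
    intro t
    simpa [eval, D] using hasDerivAt_const t (1:ℂ)
  | smul c e ih =>
    intro t
    simpa [eval, D] using (ih t).const_mul c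
  | add e₁ e₂ ih₁ ih₂ =>
    intro t
    exact (ih₁ t).add (ih₂ t)
  | sech e ih =>
    intro t
    have hc : HasDerivAt (fun t : ℝ => ((Real.cosh t : ℂ))) (Real.sinh t) t :=
      (Real.hasDerivAt_cosh t).ofReal_comp
    have hinv := (hasDerivAt_inv (coshC_ne t)).comp t hc
    have hmul := hinv.mul (ih t)
    have heq : HasDerivAt (eval (.sech e))
        (-(((Real.cosh t : ℂ)) ^ 2)⁻¹ * (Real.sinh t) * eval e t
          + ((Real.cosh t : ℂ))⁻¹ * eval (D e) t) t := by
      exact hmul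
    convert heq using 1
    simp only [eval, D]
    push_cast
    field_simp
    ring
  | tanh e ih =>
    intro t
    have hq : HasDerivAt (fun t : ℝ => Real.sinh t / Real.cosh t)
        ((Real.cosh t * Real.cosh t - Real.sinh t * Real.sinh t) / Real.cosh t ^ 2) t :=
      (Real.hasDerivAt_sinh t).div (Real.hasDerivAt_cosh t) (Real.cosh_pos t).ne'
    have hmul := hq.ofReal_comp.mul (ih t)
    have hone : Real.cosh t * Real.cosh t - Real.sinh t * Real.sinh t = 1 := by
      have := Real.cosh_sq t
      nlinarith
    replace hmul : HasDerivAt (eval (.tanh e)) _ t := hmul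
    convert hmul using 1
    simp only [eval, D, hone]
    push_cast
    field_simp
    ring
  | int e ih =>
    intro t
    have := intervalIntegral.integral_hasDerivAt_right
      ((continuous_eval e).intervalIntegrable 0 t)
      ⟨Set.univ, Filter.univ_mem, ((continuous_eval e).aestronglyMeasurable).restrict⟩
      (continuous_eval e).continuousAt
    simpa [eval, D] using this

lemma iteratedDeriv_eval (e : E) : ∀ n, iteratedDeriv n (eval e) = eval (D^[n] e) := by
  intro n
  induction n with
  | zero => simp
  | succ n ih =>
    rw [iteratedDeriv_succ, ih, Function.iterate_succ_apply']
    funext t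
    exact (hasDerivAt_eval (D^[n] e) t).deriv

lemma abs_sinh_le_cosh (x : ℝ) : |Real.sinh x| ≤ Real.cosh x := by
  rw [Real.abs_sinh, ← Real.cosh_abs]
  rw [Real.sinh_eq, Real.cosh_eq]
  have := Real.exp_pos (-|x|)
  linarith

lemma growth_eval : ∀ e, ∃ (C : ℝ) (m : ℕ), 0 ≤ C ∧ ∀ t : ℝ, ‖eval e t‖ ≤ C * (1 + |t|) ^ m := by
  intro e
  induction e with
  | one => exact ⟨1, 0, zero_le_one, fun t => by simp [eval]⟩
  | smul c e ih =>
    obtain ⟨C, m, hC, hb⟩ := ih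
    refine ⟨‖c‖ * C, m, mul_nonneg (norm_nonneg c) hC, fun t => ?_⟩
    simp only [eval, norm_mul]
    rw [mul_assoc]
    exact mul_le_mul_of_nonneg_left (hb t) (norm_nonneg c)
  | add e₁ e₂ ih₁ ih₂ =>
    obtain ⟨C₁, m₁, hC₁, hb₁⟩ := ih₁
    obtain ⟨C₂, m₂, hC₂, hb₂⟩ := ih₂
    refine ⟨C₁ + C₂, max m₁ m₂, add_nonneg hC₁ hC₂, fun t => ?_⟩
    have h1t : (1:ℝ) ≤ 1 + |t| := le_add_of_nonneg_right (abs_nonneg t)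
    calc ‖eval (.add e₁ e₂) t‖ ≤ C₁ * (1 + |t|) ^ m₁ + C₂ * (1 + |t|) ^ m₂ :=
          (norm_add_le _ _).trans (add_le_add (hb₁ t) (hb₂ t))
      _ ≤ C₁ * (1 + |t|) ^ max m₁ m₂ + C₂ * (1 + |t|) ^ max m₁ m₂ :=
          add_le_add
            (mul_le_mul_of_nonneg_left (pow_le_pow_right₀ h1t (le_max_left _ _)) hC₁)
            (mul_le_mul_of_nonneg_left (pow_le_pow_right₀ h1t (le_max_right _ _)) hC₂)
      _ = (C₁ + C₂) * (1 + |t|) ^ max m₁ m₂ := by ring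
  | sech e ih =>
    obtain ⟨C, m, hC, hb⟩ := ih
    refine ⟨C, m, hC, fun t => ?_⟩
    have h1 : ‖((Real.cosh t : ℂ))⁻¹‖ ≤ 1 := by
      rw [norm_inv, Complex.norm_real, Real.norm_eq_abs, abs_of_pos (Real.cosh_pos t)]
      exact inv_le_one_of_one_le₀ (Real.one_le_cosh t)
    calc ‖eval (.sech e) t‖ = ‖((Real.cosh t : ℂ))⁻¹‖ * ‖eval e t‖ := norm_mul _ _
      _ ≤ 1 * (C * (1 + |t|) ^ m) := by
          exact mul_le_mul h1 (hb t) (norm_nonneg _) zero_le_one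
      _ = C * (1 + |t|) ^ m := one_mul _
  | tanh e ih =>
    obtain ⟨C, m, hC, hb⟩ := ih
    refine ⟨C, m, hC, fun t => ?_⟩
    have h1 : ‖((Real.sinh t / Real.cosh t : ℝ) : ℂ)‖ ≤ 1 := by
      rw [Complex.norm_real, Real.norm_eq_abs, abs_div, abs_of_pos (Real.cosh_pos t)]
      exact div_le_one_of_le₀ (abs_sinh_le_cosh t) (Real.cosh_pos t).le
    calc ‖eval (.tanh e) t‖ = ‖((Real.sinh t / Real.cosh t : ℝ) : ℂ)‖ * ‖eval e t‖ := norm_mul _ _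
      _ ≤ 1 * (C * (1 + |t|) ^ m) := mul_le_mul h1 (hb t) (norm_nonneg _) zero_le_one
      _ = C * (1 + |t|) ^ m := one_mul _
  | int e ih =>
    obtain ⟨C, m, hC, hb⟩ := ih
    refine ⟨C, m + 1, hC, fun x => ?_⟩
    have h1x : (0:ℝ) ≤ 1 + |x| := by positivity
    have key : ‖∫ u in (0:ℝ)..x, eval e u‖ ≤ C * (1 + |x|) ^ m * |x - 0| := by
      apply intervalIntegral.norm_integral_le_of_norm_le_const
      intro u hu
      have hu' : |u| ≤ |x| := by
        rcases hu with ⟨h1, h2⟩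
        have hmin : -|x| ≤ min 0 x := le_min (neg_nonpos.mpr (abs_nonneg x)) (neg_abs_le x)
        have hmax : max 0 x ≤ |x| := max_le (abs_nonneg x) (le_abs_self x)
        rw [abs_le]
        exact ⟨hmin.trans h1.le, h2.trans hmax⟩
      calc ‖eval e u‖ ≤ C * (1 + |u|) ^ m := hb u
        _ ≤ C * (1 + |x|) ^ m := by gcongr
    calc ‖eval (.int e) x‖ ≤ C * (1 + |x|) ^ m * |x - 0| := key
      _ ≤ C * (1 + |x|) ^ m * (1 + |x|) := by
          gcongr
          simp only [sub_zero]
          linarith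
      _ = C * (1 + |x|) ^ (m + 1) := by ring

inductive SDec : E → Prop
  | sech : ∀ e, SDec (.sech e)
  | smul : ∀ (c : ℂ) {e}, SDec e → SDec (.smul c e)
  | add : ∀ {e₁ e₂}, SDec e₁ → SDec e₂ → SDec (.add e₁ e₂)
  | tanh : ∀ {e}, SDec e → SDec (.tanh e)

lemma SDec.derivE {e : E} (h : SDec e) : SDec (D e) := by
  induction h with
  | sech e => exact SDec.add (SDec.sech _) (SDec.smul _ (SDec.tanh (SDec.sech _)))
  | smul c _ ih => exact SDec.smul _ ih
  | add _ _ ih₁ ih₂ => exact SDec.add ih₁ ih₂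
  | tanh _ ih => exact SDec.add (SDec.tanh ih) (SDec.sech _)

lemma SDec.iterate {e : E} (h : SDec e) (n : ℕ) : SDec (D^[n] e) := by
  induction n with
  | zero => exact h
  | succ n ih => rw [Function.iterate_succ_apply']; exact ih.derivE

lemma cosh_inv_le (t : ℝ) : (Real.cosh t)⁻¹ ≤ 2 * Real.exp (-|t|) := by
  have h1 : Real.exp |t| / 2 ≤ Real.cosh t := by
    rw [← Real.cosh_abs, Real.cosh_eq]
    have := Real.exp_pos (-|t|)
    linarith
  have h2 : (0:ℝ) < Real.exp |t| / 2 := by positivity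
  calc (Real.cosh t)⁻¹ ≤ (Real.exp |t| / 2)⁻¹ := by
        exact inv_anti₀ h2 h1
    _ = 2 * Real.exp (-|t|) := by
        rw [Real.exp_neg]
        field_simp
  
lemma decay_eval {e : E} (h : SDec e) :
    ∃ (C : ℝ) (m : ℕ), 0 ≤ C ∧ ∀ t : ℝ, ‖eval e t‖ ≤ C * (1 + |t|) ^ m * Real.exp (-|t|) := by
  induction h with
  | sech e =>
    obtain ⟨C, m, hC, hb⟩ := growth_eval e
    refine ⟨2 * C, m, by linarith, fun t => ?_⟩
    have h1 : ‖((Real.cosh t : ℂ))⁻¹‖ ≤ 2 * Real.exp (-|t|) := by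
      rw [norm_inv, Complex.norm_real, Real.norm_eq_abs, abs_of_pos (Real.cosh_pos t)]
      exact cosh_inv_le t
    calc ‖eval (.sech e) t‖ = ‖((Real.cosh t : ℂ))⁻¹‖ * ‖eval e t‖ := norm_mul _ _
      _ ≤ (2 * Real.exp (-|t|)) * (C * (1 + |t|) ^ m) :=
          mul_le_mul h1 (hb t) (norm_nonneg _) (by positivity)
      _ = 2 * C * (1 + |t|) ^ m * Real.exp (-|t|) := by ring
  | smul c h ih =>
    obtain ⟨C, m, hC, hb⟩ := ih
    refine ⟨‖c‖ * C, m, mul_nonneg (norm_nonneg c) hC, fun t => ?_⟩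
    calc ‖eval (.smul c _) t‖ = ‖c‖ * ‖eval _ t‖ := norm_mul _ _
      _ ≤ ‖c‖ * (C * (1 + |t|) ^ m * Real.exp (-|t|)) :=
          mul_le_mul_of_nonneg_left (hb t) (norm_nonneg c)
      _ = ‖c‖ * C * (1 + |t|) ^ m * Real.exp (-|t|) := by ring
  | add h₁ h₂ ih₁ ih₂ =>
    obtain ⟨C₁, m₁, hC₁, hb₁⟩ := ih₁
    obtain ⟨C₂, m₂, hC₂, hb₂⟩ := ih₂
    refine ⟨C₁ + C₂, max m₁ m₂, add_nonneg hC₁ hC₂, fun t => ?_⟩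
    have h1t : (1:ℝ) ≤ 1 + |t| := le_add_of_nonneg_right (abs_nonneg t)
    calc ‖eval (.add _ _) t‖
        ≤ C₁ * (1 + |t|) ^ m₁ * Real.exp (-|t|) + C₂ * (1 + |t|) ^ m₂ * Real.exp (-|t|) :=
          (norm_add_le _ _).trans (add_le_add (hb₁ t) (hb₂ t))
      _ ≤ C₁ * (1 + |t|) ^ max m₁ m₂ * Real.exp (-|t|)
            + C₂ * (1 + |t|) ^ max m₁ m₂ * Real.exp (-|t|) :=
          add_le_add
            (mul_le_mul_of_nonneg_right
              (mul_le_mul_of_nonneg_left (pow_le_pow_right₀ h1t (le_max_left _ _)) hC₁)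
              (Real.exp_pos _).le)
            (mul_le_mul_of_nonneg_right
              (mul_le_mul_of_nonneg_left (pow_le_pow_right₀ h1t (le_max_right _ _)) hC₂)
              (Real.exp_pos _).le)
      _ = (C₁ + C₂) * (1 + |t|) ^ max m₁ m₂ * Real.exp (-|t|) := by ring
  | tanh h ih =>
    obtain ⟨C, m, hC, hb⟩ := ih
    refine ⟨C, m, hC, fun t => ?_⟩
    have h1 : ‖((Real.sinh t / Real.cosh t : ℝ) : ℂ)‖ ≤ 1 := by
      rw [Complex.norm_real, Real.norm_eq_abs, abs_div, abs_of_pos (Real.cosh_pos t)]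
      exact div_le_one_of_le₀ (abs_sinh_le_cosh t) (Real.cosh_pos t).le
    calc ‖eval (.tanh _) t‖ = ‖((Real.sinh t / Real.cosh t : ℝ) : ℂ)‖ * ‖eval _ t‖ := norm_mul _ _
      _ ≤ 1 * (C * (1 + |t|) ^ m * Real.exp (-|t|)) :=
          mul_le_mul h1 (hb t) (norm_nonneg _) zero_le_one
      _ = C * (1 + |t|) ^ m * Real.exp (-|t|) := one_mul _

def decayP (g : ℝ → ℂ) : Prop :=
  ∃ (C : ℝ) (m : ℕ), 0 ≤ C ∧ ∀ t : ℝ, ‖g t‖ ≤ C * (1 + |t|) ^ m * Real.exp (-|t|)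

lemma decayP_eval {e : E} (h : SDec e) (n : ℕ) : decayP (eval (D^[n] e)) :=
  decay_eval (h.iterate n)

lemma tendsto_poly_exp (K : ℕ) (C : ℝ) :
    Tendsto (fun t : ℝ => C * (1 + t) ^ K * Real.exp (-t)) atTop (𝓝 0) := by
  have h1 : Tendsto (fun t : ℝ => (1 + t)) atTop atTop :=
    tendsto_atTop_add_const_left _ 1 tendsto_id
  have h2 := (Real.tendsto_pow_mul_exp_neg_atTop_nhds_zero K).comp h1
  have h3 := h2.const_mul (C * Real.exp 1)
  rw [mul_zero] at h3
  refine h3.congr (fun t => ?_)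
  have hE : Real.exp (-(1 + t)) * Real.exp 1 = Real.exp (-t) := by
    rw [← Real.exp_add]; congr 1; ring
  simp only [Function.comp_def]
  calc C * Real.exp 1 * ((1 + t) ^ K * Real.exp (-(1 + t)))
      = C * (1 + t) ^ K * (Real.exp (-(1+t)) * Real.exp 1) := by ring
    _ = C * (1 + t) ^ K * Real.exp (-t) := by rw [hE]

lemma decayP.tendsto_zero {g : ℝ → ℂ} (hg : decayP g) : Tendsto g atTop (𝓝 0) := by
  obtain ⟨C, m, hC, hb⟩ := hg
  apply squeeze_zero_norm' ?_ (tendsto_poly_exp m C)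
  filter_upwards [eventually_ge_atTop (0:ℝ)] with t ht
  simpa [abs_of_nonneg ht] using hb t

lemma decayP.isBigO_exp {g : ℝ → ℂ} (hg : decayP g) :
    g =O[atTop] fun t : ℝ => Real.exp (-(1/2) * t) := by
  obtain ⟨C, m, hC, hb⟩ := hg
  have hlo := (isLittleO_pow_exp_pos_mul_atTop m (by norm_num : (0:ℝ) < 1/2)).def one_pos
  rw [Asymptotics.isBigO_iff]
  refine ⟨C * 2 ^ m, ?_⟩
  filter_upwards [eventually_ge_atTop (1:ℝ), hlo] with t ht hlt
  have h0t : (0:ℝ) ≤ t := by linarith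
  have h2 : t ^ m ≤ Real.exp (1/2 * t) := by
    rwa [Real.norm_eq_abs, Real.norm_eq_abs, abs_of_nonneg (pow_nonneg h0t m),
      abs_of_pos (Real.exp_pos _), one_mul] at hlt
  have h1 : (1 + t) ^ m ≤ 2 ^ m * Real.exp (1/2 * t) := by
    calc (1 + t) ^ m ≤ (2 * t) ^ m := pow_le_pow_left₀ (by linarith) (by linarith) m
      _ = 2 ^ m * t ^ m := mul_pow 2 t m
      _ ≤ 2 ^ m * Real.exp (1/2 * t) := by
          exact mul_le_mul_of_nonneg_left h2 (by positivity)
  have hE : Real.exp (1/2 * t) * Real.exp (-t) = Real.exp (-(1/2) * t) := by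
    rw [← Real.exp_add]; congr 1; ring
  calc ‖g t‖ ≤ C * (1 + t) ^ m * Real.exp (-t) := by
        simpa [abs_of_nonneg h0t] using hb t
    _ ≤ C * (2 ^ m * Real.exp (1/2 * t)) * Real.exp (-t) := by
        exact mul_le_mul_of_nonneg_right (mul_le_mul_of_nonneg_left h1 hC) (Real.exp_pos _).le
    _ = C * 2 ^ m * (Real.exp (1/2 * t) * Real.exp (-t)) := by ring
    _ = C * 2 ^ m * Real.exp (-(1/2) * t) := by rw [hE]
    _ = C * 2 ^ m * ‖Real.exp (-(1/2) * t)‖ := by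
        rw [Real.norm_eq_abs, abs_of_pos (Real.exp_pos _)]

lemma decayP.bounded_near {g : ℝ → ℂ} (hg : decayP g) :
    ∃ K : ℝ, 0 ≤ K ∧ ∀ t : ℝ, |t| ≤ 1 → ‖g t‖ ≤ K := by
  obtain ⟨C, m, hC, hb⟩ := hg
  refine ⟨C * 2 ^ m, by positivity, fun t ht => ?_⟩
  calc ‖g t‖ ≤ C * (1 + |t|) ^ m * Real.exp (-|t|) := hb t
    _ ≤ C * 2 ^ m * 1 := by
        refine mul_le_mul ?_ (Real.exp_le_one_iff.mpr (neg_nonpos.mpr (abs_nonneg t)))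
          (Real.exp_pos _).le (by positivity)
        exact mul_le_mul_of_nonneg_left
          (pow_le_pow_left₀ (by positivity) (by linarith) m) hC
    _ = C * 2 ^ m := mul_one _

lemma decayP.isBigO_zero {g : ℝ → ℂ} (hg : decayP g) :
    g =O[𝓝[>] (0:ℝ)] fun t : ℝ => t ^ (-(0:ℝ)) := by
  obtain ⟨K, hK, hb⟩ := hg.bounded_near
  rw [Asymptotics.isBigO_iff]
  refine ⟨K, ?_⟩
  filter_upwards [Ioo_mem_nhdsGT_of_mem (Set.mem_Ico.mpr ⟨le_refl (0:ℝ), zero_lt_one⟩)]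
    with t ht
  have : ‖(t:ℝ) ^ (-(0:ℝ))‖ = 1 := by
    rw [neg_zero, Real.rpow_zero, norm_one]
  rw [this, mul_one]
  exact hb t (by rw [abs_of_pos ht.1]; exact ht.2.le)

lemma decayP.mellinConv {g : ℝ → ℂ} (hc : Continuous g) (hd : decayP g) {σ : ℂ}
    (hσ : 0 < σ.re) : MellinConvergent g σ :=
  mellinConvergent_of_isBigO_rpow_exp (by norm_num : (0:ℝ) < 1/2)
    (hc.locallyIntegrable.locallyIntegrableOn _) hd.isBigO_exp hd.isBigO_zero hσ

lemma decayP.mellinDiff {g : ℝ → ℂ} (hc : Continuous g) (hd : decayP g) {s : ℂ}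
    (hs : 0 < s.re) : DifferentiableAt ℂ (mellin g) s :=
  mellin_differentiableAt_of_isBigO_rpow_exp (by norm_num : (0:ℝ) < 1/2)
    (hc.locallyIntegrable.locallyIntegrableOn _) hd.isBigO_exp hd.isBigO_zero hs

lemma mellin_step {g g' : ℝ → ℂ} (hc : Continuous g) (hc' : Continuous g')
    (hder : ∀ t, HasDerivAt g (g' t) t) (hd : decayP g) (hd' : decayP g')
    {σ : ℂ} (hσ : 0 < σ.re) :
    mellin g' (σ + 1) = -σ * mellin g σ := by
  have hσ0 : σ ≠ 0 := fun h => by simp [h] at hσ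
  have hσ1 : 0 < (σ + 1).re := by rw [Complex.add_re, Complex.one_re]; linarith
  have hI1 : IntegrableOn (fun t : ℝ => (t:ℂ) ^ (σ - 1) • g t) (Set.Ioi 0) :=
    hd.mellinConv hc hσ
  have hI2 : IntegrableOn (fun t : ℝ => (t:ℂ) ^ ((σ + 1) - 1) • g' t) (Set.Ioi 0) :=
    hd'.mellinConv hc' hσ1
  set u : ℝ → ℂ := fun t => (t:ℂ) ^ σ * g t with hu
  set w : ℝ → ℂ := fun t => σ * ((t:ℂ) ^ (σ - 1) • g t) + (t:ℂ) ^ ((σ + 1) - 1) • g' t with hw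
  have hu0 : u 0 = 0 := by
    simp [hu, Complex.ofReal_zero, Complex.zero_cpow hσ0]
  have hderu : ∀ t ∈ Set.Ioi (0:ℝ), HasDerivAt u (w t) t := by
    intro t ht
    have ht0 : (t:ℝ) ≠ 0 := ne_of_gt ht
    have h1 : HasDerivAt (fun y : ℝ => (y:ℂ) ^ (σ - 1 + 1) / (σ - 1 + 1)) ((t:ℂ) ^ (σ - 1)) t :=
      hasDerivAt_ofReal_cpow_const' ht0 (by
        intro h
        apply hσ0
        linear_combination h)
    have h2 := h1.const_mul σ
    have he : (fun y : ℝ => σ * ((y:ℂ) ^ (σ - 1 + 1) / (σ - 1 + 1))) =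
        fun y : ℝ => (y:ℂ) ^ σ := by
      funext y
      rw [sub_add_cancel]
      field_simp
    rw [he] at h2
    have hmul := h2.mul (hder t)
    have : w t = σ * (t:ℂ) ^ (σ - 1) * g t + (t:ℂ) ^ σ * g' t := by
      rw [hw]
      simp only [smul_eq_mul, add_sub_cancel_right]
      ring
    rw [this]
    exact hmul
  have hcw : ContinuousWithinAt u (Set.Ici 0) 0 := by
    rw [ContinuousWithinAt, hu0]
    obtain ⟨K, hK, hb⟩ := hd.bounded_near
    have hbound : ∀ᶠ t in 𝓝[Set.Ici (0:ℝ)] 0, ‖u t‖ ≤ K * t ^ σ.re := by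
      filter_upwards [Icc_mem_nhdsGE_of_mem (Set.mem_Ico.mpr ⟨le_refl (0:ℝ), zero_lt_one⟩)]
        with t ht
      rcases eq_or_lt_of_le ht.1 with h0 | h0
      · rw [← h0]
        simp [hu0, Real.zero_rpow (ne_of_gt hσ)]
      · have h1 : ‖(t:ℂ) ^ σ‖ = t ^ σ.re := by
          rw [Complex.norm_cpow_eq_rpow_re_of_pos h0]
        have h2 : ‖g t‖ ≤ K := hb t (by rw [abs_of_pos h0]; exact ht.2)
        calc ‖u t‖ = ‖(t:ℂ) ^ σ‖ * ‖g t‖ := norm_mul _ _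
          _ ≤ t ^ σ.re * K := by
              rw [h1]
              exact mul_le_mul_of_nonneg_left h2 (Real.rpow_nonneg h0.le _)
          _ = K * t ^ σ.re := mul_comm _ _
    have hlim : Tendsto (fun t : ℝ => K * t ^ σ.re) (𝓝[Set.Ici (0:ℝ)] 0) (𝓝 0) := by
      have hc0 : ContinuousAt (fun x : ℝ => x ^ σ.re) 0 :=
        Real.continuousAt_rpow_const 0 σ.re (Or.inr hσ.le)
      have h := (hc0.tendsto.mono_left (nhdsWithin_le_nhds (s := Set.Ici (0:ℝ)))).const_mul K
      simpa [Real.zero_rpow (ne_of_gt hσ)] using h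
    exact squeeze_zero_norm' hbound hlim
  have htop : Tendsto u atTop (𝓝 0) := by
    obtain ⟨C, m, hC, hb⟩ := hd
    apply squeeze_zero_norm' ?_ (tendsto_poly_exp (⌈σ.re⌉₊ + m) C)
    filter_upwards [eventually_ge_atTop (1:ℝ)] with t ht
    have h0 : (0:ℝ) < t := by linarith
    have h1 : ‖(t:ℂ) ^ σ‖ = t ^ σ.re := by
      rw [Complex.norm_cpow_eq_rpow_re_of_pos h0]
    have h2 : t ^ σ.re ≤ (1 + t) ^ ⌈σ.re⌉₊ := by
      calc t ^ σ.re ≤ t ^ ((⌈σ.re⌉₊ : ℕ) : ℝ) :=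
            Real.rpow_le_rpow_of_exponent_le ht (Nat.le_ceil _)
        _ = t ^ (⌈σ.re⌉₊ : ℕ) := Real.rpow_natCast t _
        _ ≤ (1 + t) ^ (⌈σ.re⌉₊ : ℕ) := pow_le_pow_left₀ h0.le (by linarith) _
    calc ‖u t‖ = t ^ σ.re * ‖g t‖ := by rw [hu, norm_mul, h1]
      _ ≤ (1 + t) ^ ⌈σ.re⌉₊ * (C * (1 + t) ^ m * Real.exp (-t)) := by
          apply mul_le_mul h2 ?_ (norm_nonneg _) (by positivity)
          simpa [abs_of_nonneg h0.le] using hb t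
      _ = C * (1 + t) ^ (⌈σ.re⌉₊ + m) * Real.exp (-t) := by rw [pow_add]; ring
  have hIw : IntegrableOn w (Set.Ioi (0:ℝ)) := (hI1.const_mul σ).add hI2
  have key := MeasureTheory.integral_Ioi_of_hasDerivAt_of_tendsto hcw hderu hIw htop
  rw [hu0, zero_sub, neg_zero] at key
  have hsplit : ∫ t in Set.Ioi (0:ℝ), w t = σ * mellin g σ + mellin g' (σ + 1) := by
    rw [hw]
    rw [MeasureTheory.integral_add (hI1.const_mul σ) hI2,
      MeasureTheory.integral_const_mul]
    rfl
  have hz : σ * mellin g σ + mellin g' (σ + 1) = 0 := by rw [← hsplit, key]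
  linear_combination hz

lemma mellin_one_eq {g g' : ℝ → ℂ} (hc' : Continuous g')
    (hder : ∀ t, HasDerivAt g (g' t) t) (hd : decayP g) (hd' : decayP g') :
    mellin g' 1 = -g 0 := by
  have hI : IntegrableOn g' (Set.Ioi (0:ℝ)) := by
    have h := hd'.mellinConv hc' (by simp : 0 < (1:ℂ).re)
    simpa [MellinConvergent, sub_self, Complex.cpow_zero] using h
  have key := MeasureTheory.integral_Ioi_of_hasDerivAt_of_tendsto
    ((hder 0).continuousAt.continuousWithinAt) (fun x _ => hder x) hI hd.tendsto_zero
  rw [zero_sub] at key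
  rw [mellin]
  simp only [sub_self, Complex.cpow_zero, one_smul]
  exact key

lemma re_add_nat (s : ℂ) (N : ℕ) : (s + N).re = s.re + N := by
  simp [Complex.add_re, Complex.natCast_re]

noncomputable def LamN (e : E) (N : ℕ) (s : ℂ) : ℂ :=
  (-1 : ℂ) ^ N * (Complex.Gamma (s + N))⁻¹ * mellin (eval (D^[N] e)) (s + N)

lemma LamN_succ {e : E} (h : SDec e) (N : ℕ) {s : ℂ} (hs : 0 < (s + N).re) :
    LamN e (N + 1) s = LamN e N s := by
  set σ : ℂ := s + N with hσdef
  have hσ0 : σ ≠ 0 := fun hh => by rw [hh] at hs; simp at hs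
  have hΓ : Complex.Gamma σ ≠ 0 := Complex.Gamma_ne_zero_of_re_pos hs
  have hcast : s + ((N + 1 : ℕ) : ℂ) = σ + 1 := by rw [hσdef]; push_cast; ring
  have hstep : mellin (eval (D^[N+1] e)) (σ + 1) = -σ * mellin (eval (D^[N] e)) σ := by
    rw [Function.iterate_succ_apply']
    exact mellin_step (continuous_eval _) (continuous_eval _) (hasDerivAt_eval _)
      (decayP_eval h N)
      (by have hh := decayP_eval h (N+1); rwa [Function.iterate_succ_apply'] at hh) hs
  rw [LamN, LamN, hcast, hstep, ← hσdef, Complex.Gamma_add_one σ hσ0, pow_succ, mul_inv]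
  field_simp

lemma LamN_mono {e : E} (h : SDec e) {N M : ℕ} (hNM : N ≤ M) {s : ℂ}
    (hs : 0 < (s + N).re) : LamN e N s = LamN e M s := by
  induction M, hNM using Nat.le_induction with
  | base => rfl
  | succ M hNM ih =>
    rw [ih, LamN_succ h M ?_]
    rw [re_add_nat] at hs ⊢
    have : (N : ℝ) ≤ M := Nat.cast_le.mpr hNM
    linarith

lemma LamN_diffAt {e : E} (h : SDec e) {N : ℕ} {s : ℂ} (hs : 0 < (s + N).re) :
    DifferentiableAt ℂ (LamN e N) s := by
  apply DifferentiableAt.mul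
  · apply DifferentiableAt.mul (differentiableAt_const _)
    have h1 : Differentiable ℂ fun z : ℂ => (Complex.Gamma (z + N))⁻¹ := by
      have := Complex.differentiable_one_div_Gamma.comp
        ((differentiable_id (𝕜 := ℂ)).add_const (N : ℂ))
      simpa [Function.comp_def] using this
    exact (h1 s)
  · have h2 := (decayP_eval h N).mellinDiff (continuous_eval _) hs
    have h3 : DifferentiableAt ℂ (fun z : ℂ => z + (N : ℂ)) s :=
      ((differentiable_id (𝕜 := ℂ)).add_const (N : ℂ)) s
    simpa [Function.comp_def] using DifferentiableAt.comp s h2 h3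

noncomputable def Gaux : List ℕ → E
  | [] => .one
  | 0 :: ks => Gaux ks
  | 1 :: ks => .smul (-Complex.I) (.int (Gaux ks))
  | (k + 2) :: ks => .smul (-Complex.I) (.int (.sech (Gaux ((k + 1) :: ks))))
termination_by ks => ks.sum + ks.length
decreasing_by
  all_goals simp [List.sum_cons]
  omega

lemma eval_Gaux : ∀ (n : ℕ) (l : List ℕ), l.sum + l.length ≤ n →
    ∀ t, eval (Gaux l) t = gaux l t := by
  intro n
  induction n with
  | zero =>
    intro l hl t
    match l with
    | [] => simp [Gaux, gaux, eval]
    | k :: ks => simp [List.length_cons] at hl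
  | succ n ih =>
    intro l hl t
    match l with
    | [] => simp [Gaux, gaux, eval]
    | 0 :: ks =>
      have h2 : ks.sum + ks.length ≤ n := by simp [List.sum_cons] at hl; omega
      rw [show Gaux (0 :: ks) = Gaux ks from by rw [Gaux]]
      rw [show gaux (0 :: ks) = gaux ks from by rw [gaux]]
      exact ih ks h2 t
    | 1 :: ks =>
      have h2 : ks.sum + ks.length ≤ n := by simp [List.sum_cons] at hl; omega
      rw [show Gaux (1 :: ks) = .smul (-Complex.I) (.int (Gaux ks)) from by rw [Gaux]]
      rw [show gaux (1 :: ks) = fun x => -Complex.I * ∫ u in (0:ℝ)..x, gaux ks u from by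
        rw [gaux]]
      simp only [eval]
      congr 1
      apply intervalIntegral.integral_congr
      intro u _
      exact ih ks h2 u
    | (k+2) :: ks =>
      have h2 : ((k+1) :: ks).sum + ((k+1) :: ks).length ≤ n := by
        simp [List.sum_cons] at hl ⊢
        omega
      rw [show Gaux ((k+2) :: ks) = .smul (-Complex.I) (.int (.sech (Gaux ((k+1) :: ks))))
        from by rw [Gaux]]
      rw [show gaux ((k+2) :: ks) =
          fun x => -Complex.I * ∫ u in (0:ℝ)..x, gaux ((k+1) :: ks) u / (Real.cosh u : ℂ)
        from by rw [gaux]]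
      simp only [eval]
      congr 1
      apply intervalIntegral.integral_congr
      intro u _
      show ((Real.cosh u : ℂ))⁻¹ * eval (Gaux ((k+1) :: ks)) u = _
      rw [ih _ h2 u, inv_mul_eq_div]

end S17

/-- `λ(k_1,…,k_r; s)` extends to an entire function `Λ` whose values at
non-positive integers are `Λ(-n) = (-1)^n ℰ_n^{(k_1,…,k_r)}`, where the multi-poly-Euler
number `ℰ_n^{(k_1,…,k_r)}` is the `n`-th derivative at `0` of `t ↦ g_{(k_1,…,k_r)}(t)/cosh t`. -/
theorem stmt17 (ks : List ℕ) (hk : ∀ k ∈ ks, 1 ≤ k) :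
    ∃ Λ : ℂ → ℂ, Differentiable ℂ Λ ∧
      (∀ s : ℂ, 0 < s.re → Λ s = lambdaFun ks s) ∧
      (∀ n : ℕ, Λ (-(n : ℂ)) = (-1 : ℂ) ^ n *
        iteratedDeriv n (fun t : ℝ => gfun ks t / (Real.cosh t : ℂ)) 0) := by
  classical
  set F : S17.E := S17.E.sech (S17.Gaux ks.reverse) with hF
  have hSD : S17.SDec F := S17.SDec.sech _
  have hFg : ∀ t, S17.eval F t = gfun ks t / (Real.cosh t : ℂ) := by
    intro t
    show ((Real.cosh t : ℂ))⁻¹ * S17.eval (S17.Gaux ks.reverse) t = _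
    rw [S17.eval_Gaux (ks.reverse.sum + ks.reverse.length) _ le_rfl t, inv_mul_eq_div]
    rfl
  refine ⟨fun s => S17.LamN F (⌊|s.re|⌋₊ + 1) s, ?_, ?_, ?_⟩
  · intro s₀
    set M : ℕ := ⌊|s₀.re|⌋₊ + 2 with hM
    have hs₀M : 0 < (s₀ + M).re := by
      rw [S17.re_add_nat]
      have h1 : -|s₀.re| ≤ s₀.re := neg_abs_le _
      have h2 : |s₀.re| < ⌊|s₀.re|⌋₊ + 1 := Nat.lt_floor_add_one _
      have h3 : ((M : ℕ) : ℝ) = (⌊|s₀.re|⌋₊ : ℝ) + 2 := by rw [hM]; push_cast; ring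
      rw [h3]
      linarith
    have hev : ∀ s : ℂ, dist s s₀ < 1 →
        S17.LamN F (⌊|s.re|⌋₊ + 1) s = S17.LamN F M s := by
      intro s hs
      have h1 : 0 < (s + ((⌊|s.re|⌋₊ + 1 : ℕ) : ℂ)).re := by
        rw [S17.re_add_nat]
        have ha := Nat.lt_floor_add_one |s.re|
        have hb := neg_abs_le s.re
        push_cast
        linarith
      have h2 : (⌊|s.re|⌋₊ + 1) ≤ M := by
        have h3 : |s.re - s₀.re| ≤ dist s s₀ := by
          rw [Complex.dist_eq, ← Complex.sub_re]
          exact Complex.abs_re_le_norm _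
        have hre : |s.re| ≤ |s₀.re| + 1 := by
          calc |s.re| = |s.re - s₀.re + s₀.re| := by ring_nf
            _ ≤ |s.re - s₀.re| + |s₀.re| := abs_add_le _ _
            _ ≤ |s₀.re| + 1 := by
                have := h3.trans hs.le
                linarith
        have h4 : ⌊|s.re|⌋₊ ≤ ⌊|s₀.re| + 1⌋₊ := Nat.floor_le_floor hre
        rw [Nat.floor_add_one (abs_nonneg _)] at h4
        omega
      exact S17.LamN_mono hSD h2 h1
    have heq : (fun s => S17.LamN F (⌊|s.re|⌋₊ + 1) s) =ᶠ[nhds s₀] S17.LamN F M := by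
      filter_upwards [Metric.ball_mem_nhds s₀ one_pos] with s hs
      exact hev s (Metric.mem_ball.mp hs)
    exact (S17.LamN_diffAt hSD hs₀M).congr_of_eventuallyEq heq
  · intro s hs
    show S17.LamN F (⌊|s.re|⌋₊ + 1) s = lambdaFun ks s
    have h0 : 0 < (s + ((0 : ℕ) : ℂ)).re := by simpa using hs
    rw [← S17.LamN_mono hSD (Nat.zero_le _) h0]
    rw [S17.LamN, lambdaFun]
    simp only [pow_zero, Function.iterate_zero, id, Nat.cast_zero, add_zero, one_mul]
    rw [one_div]
    congr 1
    rw [mellin]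
    apply setIntegral_congr_fun measurableSet_Ioi
    intro t ht
    dsimp only
    rw [smul_eq_mul, hFg t, mul_div_assoc]
  · intro n
    show S17.LamN F (⌊|((-(n:ℂ)).re)|⌋₊ + 1) (-(n:ℂ)) = _
    have hNf : ⌊|((-(n:ℂ)).re)|⌋₊ + 1 = n + 1 := by
      simp [Complex.neg_re, Complex.natCast_re, abs_neg, Nat.abs_cast, Nat.floor_natCast]
    rw [hNf, S17.LamN]
    have hcast : (-(n:ℂ)) + ((n + 1 : ℕ) : ℂ) = 1 := by push_cast; ring
    rw [hcast, Complex.Gamma_one, inv_one, mul_one]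
    have hmel : mellin (S17.eval (S17.D^[n+1] F)) 1 = -(S17.eval (S17.D^[n] F) 0) := by
      rw [Function.iterate_succ_apply']
      exact S17.mellin_one_eq (S17.continuous_eval _) (S17.hasDerivAt_eval _)
        (S17.decayP_eval hSD n)
        (by have hh := S17.decayP_eval hSD (n+1); rwa [Function.iterate_succ_apply'] at hh)
    rw [hmel]
    have hfun : (fun t : ℝ => gfun ks t / (Real.cosh t : ℂ)) = S17.eval F := by
      funext t
      exact (hFg t).symm
    rw [hfun, S17.iteratedDeriv_eval, pow_succ]
    ring
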